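/- Inflation-restriction exactness: if H is a normal subgroup of G, M a G-module, r ≥ 1, and H^i(H, M) = 0 for all 0 < i < r, then the sequence 0 → H^r(G/H, M^H) → H^r(G, M) → H^r(H, M), with maps inflation and restriction, is exact. -/

import Mathlib

namespace GroupCoh

variable (G : Type) [Group G] (M : Type) [AddCommGroup M] [DistribMulAction G M]

/-- Inhomogeneous cochains: functions `G^m → M`. -/
abbrev C (m : ℕ) : Type := (Fin m → G) → M

/-- The standard inhomogeneous coboundary map. -/
def dPlus (m : ℕ) : C G M m →+ C G M (m + 1) :=
  AddMonoidHom.mk' (fun f g =>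
    g 0 • f (fun i => g i.succ) +
      ∑ j : Fin (m + 1), ((-1 : ℤ) ^ (j.val + 1)) • f (Fin.contractNth j (· * ·) g))
    (fun a b => by
      funext g
      simp only [Pi.add_apply, smul_add, Finset.sum_add_distrib]
      abel)

/-- Coboundaries in degree `r`. -/
def cobound : ∀ r : ℕ, AddSubgroup (C G M r)
  | 0 => ⊥
  | (r + 1) => (dPlus G M r).range

/-- Group cohomology `H^r(G, M)`, computed by the inhomogeneous cochain complex. -/
def Hcoh (r : ℕ) : Type :=
  (dPlus G M r).ker ⧸ (cobound G M r).addSubgroupOf (dPlus G M r).ker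

instance (r : ℕ) : AddCommGroup (Hcoh G M r) := inferInstanceAs (AddCommGroup (_ ⧸ _))

/-- Inhomogeneous chains: finitely supported functions `G^m →₀ M`. -/
abbrev Ch (m : ℕ) : Type := (Fin m → G) →₀ M

/-- The standard inhomogeneous boundary map on chains. -/
noncomputable def dChain (m : ℕ) : Ch G M (m + 1) →+ Ch G M m :=
  Finsupp.liftAddHom (fun γ =>
    AddMonoidHom.mk' (fun x =>
      Finsupp.single (fun i => γ i.succ) ((γ 0)⁻¹ • x) +
        (∑ j : Fin m, ((-1 : ℤ) ^ (j.val + 1)) •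
          Finsupp.single (Fin.contractNth j.castSucc (· * ·) γ) x) +
        ((-1 : ℤ) ^ (m + 1)) • Finsupp.single (fun i => γ i.castSucc) x)
      (fun a b => by
        simp only [smul_add, Finsupp.single_add, Finset.sum_add_distrib]
        abel))

/-- Cycles in degree `r`. -/
noncomputable def cyc : ∀ r : ℕ, AddSubgroup (Ch G M r)
  | 0 => ⊤
  | (r + 1) => (dChain G M r).ker

/-- Group homology `H_r(G, M)`, computed by the inhomogeneous chain complex. -/
noncomputable def Hhom (r : ℕ) : Type :=
  cyc G M r ⧸ ((dChain G M r).range.addSubgroupOf (cyc G M r))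

noncomputable instance (r : ℕ) : AddCommGroup (Hhom G M r) :=
  inferInstanceAs (AddCommGroup (_ ⧸ _))

end GroupCoh

section

variable (G : Type) [Group G] (H : Subgroup G) [hN : H.Normal]
variable (M : Type) [AddCommGroup M] [DistribMulAction G M]

/-- The `H`-invariants `M^H` of a `G`-module. -/
def Hinvariants : AddSubgroup M where
  carrier := {m : M | ∀ h : H, (h : G) • m = m}
  zero_mem' := fun h => smul_zero _
  add_mem' := fun ha hb h => by rw [smul_add, ha h, hb h]
  neg_mem' := fun ha h => by rw [smul_neg, ha h]

/-- The induced action of `G/H` on `M^H`. -/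
noncomputable instance quotientInvariantsAction :
    DistribMulAction (G ⧸ H) (Hinvariants G H M) where
  smul c m :=
    Quotient.liftOn' c
      (fun g => (⟨g • (m : M), fun h' => by
        have e : (h' : G) * g = g * (g⁻¹ * (h' : G) * g) := by group
        rw [← mul_smul, e, mul_smul,
          m.2 ⟨g⁻¹ * (h' : G) * g, by
            have := hN.conj_mem (h' : G) h'.2 g⁻¹
            simpa using this⟩]⟩ : Hinvariants G H M))
      (fun a b hab => by
        refine Subtype.ext ?_
        have hmem : a⁻¹ * b ∈ H := QuotientGroup.leftRel_apply.mp hab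
        show a • (m : M) = b • (m : M)
        calc a • (m : M) = a • ((a⁻¹ * b) • (m : M)) := by rw [m.2 ⟨a⁻¹ * b, hmem⟩]
          _ = b • (m : M) := by rw [← mul_smul, mul_inv_cancel_left])
  one_smul m := Subtype.ext (one_smul G (m : M))
  mul_smul c d m := by
    induction c using Quotient.inductionOn' with
    | h a =>
      induction d using Quotient.inductionOn' with
      | h b => exact Subtype.ext (mul_smul a b (m : M))
  smul_zero c := by
    induction c using Quotient.inductionOn' with
    | h a => exact Subtype.ext (smul_zero a)
  smul_add c m n := by
    induction c using Quotient.inductionOn' with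
    | h a => exact Subtype.ext (smul_add a (m : M) (n : M))

/-- Inflation on inhomogeneous cochains. -/
noncomputable def inflationC (r : ℕ) (f : GroupCoh.C (G ⧸ H) (Hinvariants G H M) r) :
    GroupCoh.C G M r :=
  fun γ => ((f (fun i => QuotientGroup.mk (γ i)) : Hinvariants G H M) : M)

/-- Restriction on inhomogeneous cochains. -/
def restrictionC (r : ℕ) (f : GroupCoh.C G M r) : GroupCoh.C H M r :=
  fun γ => f (fun i => (γ i : G))

end


section InfResAux
open GroupCoh
namespace GroupCoh
variable {G : Type} [Group G] {M : Type} [AddCommGroup M] [DistribMulAction G M]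
lemma dPlus_apply (m : ℕ) (f : C G M m) (g : Fin (m+1) → G) :
    dPlus G M m f g = g 0 • f (fun i => g i.succ) +
      ∑ j : Fin (m + 1), ((-1 : ℤ) ^ (j.val + 1)) • f (Fin.contractNth j (· * ·) g) := rfl

lemma contractNth_comp {Γ Γ' : Type} [Mul Γ] [Mul Γ'] (ψ : Γ' → Γ)
    (hψ : ∀ a b, ψ (a * b) = ψ a * ψ b) {n : ℕ} (j : Fin (n+1)) (γ : Fin (n+1) → Γ') (i : Fin n) :
    ψ (Fin.contractNth j (· * ·) γ i) = Fin.contractNth j (· * ·) (fun i => ψ (γ i)) i := by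
  rcases lt_trichotomy (i : ℕ) (j : ℕ) with h | h | h
  · rw [Fin.contractNth_apply_of_lt _ _ _ _ h, Fin.contractNth_apply_of_lt _ _ _ _ h]
  · rw [Fin.contractNth_apply_of_eq _ _ _ _ h, Fin.contractNth_apply_of_eq _ _ _ _ h, hψ]
  · rw [Fin.contractNth_apply_of_gt _ _ _ _ h, Fin.contractNth_apply_of_gt _ _ _ _ h]

open GroupCoh in
lemma dPlus_compat {Γ Γ' M M' : Type} [Group Γ] [Group Γ'] [AddCommGroup M]
    [DistribMulAction Γ M] [AddCommGroup M'] [DistribMulAction Γ' M']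
    (ψ : Γ' → Γ) (hψ : ∀ a b, ψ (a * b) = ψ a * ψ b)
    (φ : M →+ M') (hφ : ∀ (γ : Γ') (m : M), φ (ψ γ • m) = γ • φ m)
    (r : ℕ) (f : C Γ M r) :
    dPlus Γ' M' r (fun γ => φ (f (fun i => ψ (γ i)))) =
      fun γ => φ (dPlus Γ M r f (fun i => ψ (γ i))) := by
  funext γ
  rw [dPlus_apply, dPlus_apply, map_add, map_sum, ← hφ]
  congr 1
  refine Finset.sum_congr rfl fun j _ => ?_
  rw [map_zsmul]
  exact congrArg (fun y => ((-1:ℤ)^(j.val+1)) • y)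
    (congrArg φ (congrArg f (funext fun i => contractNth_comp ψ hψ j γ i)))

noncomputable def toRep (G : Type) [Group G] (M : Type) [AddCommGroup M] [DistribMulAction G M] :
    Rep ℤ G := Rep.of (Representation.ofDistribMulAction ℤ G M)

lemma dPlus_eq_d (G : Type) [Group G] (M : Type) [AddCommGroup M] [DistribMulAction G M]
    (m : ℕ) (f : C G M m) :
    dPlus G M m f = (inhomogeneousCochains.d (toRep G M) m).hom f := rfl

lemma d_sq (G : Type) [Group G] (M : Type) [AddCommGroup M] [DistribMulAction G M]
    (m : ℕ) (f : C G M m) : dPlus G M (m+1) (dPlus G M m f) = 0 := by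
  have := congrArg (fun φ => ModuleCat.Hom.hom φ f)
    (groupCohomology.inhomogeneousCochains.d_comp_d m (toRep G M))
  simp only [ModuleCat.hom_comp, LinearMap.comp_apply, ModuleCat.hom_zero,
    LinearMap.zero_apply] at this
  rw [dPlus_eq_d, dPlus_eq_d]
  exact this

end GroupCoh

lemma contractNth_zero_cons {Γ : Type} [Mul Γ] {n : ℕ} (a : Γ) (g : Fin (n+1) → Γ) :
    Fin.contractNth 0 (· * ·) (Fin.cons a g) = Fin.cons (a * g 0) (fun i => g i.succ) := by
  funext i
  induction i using Fin.cases with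
  | zero =>
      rw [Fin.contractNth_apply_of_eq _ _ _ _ (by simp)]
      simp
  | succ k =>
      rw [Fin.contractNth_apply_of_gt _ _ _ _ (by simp), Fin.cons_succ, Fin.cons_succ]

lemma contractNth_succ_cons {Γ : Type} [Mul Γ] {n : ℕ} (j : Fin (n+1)) (a : Γ)
    (g : Fin (n+1) → Γ) :
    Fin.contractNth j.succ (· * ·) (Fin.cons a g) = Fin.cons a (Fin.contractNth j (· * ·) g) := by
  funext i
  induction i using Fin.cases with
  | zero =>
      rw [Fin.contractNth_apply_of_lt _ _ _ _ (by simp)]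
      simp
  | succ k =>
      rw [Fin.cons_succ]
      rcases lt_trichotomy (k : ℕ) (j : ℕ) with h | h | h
      · rw [Fin.contractNth_apply_of_lt _ _ _ _ (by simpa using h),
          Fin.contractNth_apply_of_lt _ _ _ _ h, Fin.castSucc_fin_succ, Fin.cons_succ]
      · rw [Fin.contractNth_apply_of_eq _ _ _ _ (by simpa using h),
          Fin.contractNth_apply_of_eq _ _ _ _ h, Fin.castSucc_fin_succ, Fin.cons_succ,
          Fin.cons_succ]
      · rw [Fin.contractNth_apply_of_gt _ _ _ _ (by simpa using h),
          Fin.contractNth_apply_of_gt _ _ _ _ h, Fin.cons_succ]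

open GroupCoh in
lemma acyc {Γ V X A : Type} [Group Γ] [AddCommGroup V] [DistribMulAction Γ V] [AddCommGroup A]
    (ε : V ≃+ (X → A)) (act : X → Γ → X) (ρX : X → Γ) (bX : X → X)
    (hsmul : ∀ (γ : Γ) (v : V) (x : X), ε (γ • v) x = ε v (act x γ))
    (hb : ∀ x, act (bX x) (ρX x) = x)
    (hρ : ∀ x γ, ρX (act x γ) = ρX x * γ)
    (hbact : ∀ x γ, bX (act x γ) = bX x)
    (n : ℕ) (f : C Γ V (n+1)) (hf : dPlus Γ V (n+1) f = 0) :
    f ∈ (dPlus Γ V n).range := by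
  classical
  set s : ∀ m : ℕ, C Γ V (m+1) → C Γ V m := fun m g γ =>
    ε.symm (fun x => ε (g (Fin.cons (ρX x) γ)) (bX x)) with hs
  have key : ∀ (m : ℕ) (g : C Γ V (m+1)) (γ : Fin (m+1) → Γ) (x : X),
      ε (dPlus Γ V m (s m g) γ) x = ε (g γ) x - ε (s (m+1) (dPlus Γ V (m+1) g) γ) x := by
    intro m g γ x
    have hsign : ∀ (j : ℕ), ((-1:ℤ)^(j+1+1)) = -((-1:ℤ)^(j+1)) := fun j => by ring
    simp only [hs, dPlus_apply, map_add, Pi.add_apply, map_sum, Finset.sum_apply, map_zsmul,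
      Pi.smul_apply, AddEquiv.apply_symm_apply, hsmul, hρ, hbact, hb, Fin.cons_zero, Fin.cons_succ]
    conv_rhs => rw [Fin.sum_univ_succ]
    simp only [Fin.val_zero, zero_add, pow_one, Fin.val_succ, hsign, neg_smul, one_smul,
      contractNth_zero_cons, contractNth_succ_cons, Finset.sum_neg_distrib]
    abel
  refine ⟨s n f, ?_⟩
  funext γ
  apply ε.injective; funext x
  have h2 := key n f γ x
  rw [hf] at h2
  simpa [hs] using h2

open GroupCoh

lemma mem_cobound_succ {Γ A : Type} [Group Γ] [AddCommGroup A] [DistribMulAction Γ A]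
    (k : ℕ) (f : C Γ A (k+1)) : f ∈ cobound Γ A (k+1) ↔ f ∈ (dPlus Γ A k).range := Iff.rfl

lemma hcoh_subsingleton_iff (Γ A : Type) [Group Γ] [AddCommGroup A] [DistribMulAction Γ A]
    (i : ℕ) :
    Subsingleton (Hcoh Γ A i) ↔ ∀ f ∈ (dPlus Γ A i).ker, f ∈ cobound Γ A i := by
  have hiff : Subsingleton (Hcoh Γ A i) ↔ Subsingleton
      ((dPlus Γ A i).ker ⧸ (cobound Γ A i).addSubgroupOf (dPlus Γ A i).ker) := Iff.rfl
  rw [hiff]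
  constructor
  · intro h f hf
    have h2 : (QuotientAddGroup.mk (⟨f, hf⟩ : (dPlus Γ A i).ker) :
        (dPlus Γ A i).ker ⧸ (cobound Γ A i).addSubgroupOf (dPlus Γ A i).ker) = 0 :=
      Subsingleton.elim _ _
    have h3 := (QuotientAddGroup.eq_zero_iff _).mp h2
    exact (AddSubgroup.mem_addSubgroupOf).mp h3
  · intro h
    refine ⟨fun a b => ?_⟩
    induction a using QuotientAddGroup.induction_on with
    | H x =>
      induction b using QuotientAddGroup.induction_on with
      | H y =>
        apply (QuotientAddGroup.eq).mpr
        apply (AddSubgroup.mem_addSubgroupOf).mpr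
        have hx := h _ x.2
        have hy := h _ y.2
        have hco : ((-x + y : (dPlus Γ A i).ker) : C Γ A i) = -(x : C Γ A i) + (y : C Γ A i) := rfl
        rw [hco]
        exact add_mem (neg_mem hx) hy

/-- Coinduced module. -/
def Coind (G M : Type) : Type := G → M

instance (G M : Type) [AddCommGroup M] : AddCommGroup (Coind G M) := Pi.addCommGroup

instance coindAction (G M : Type) [Group G] [AddCommGroup M] : DistribMulAction G (Coind G M) where
  smul g φ := fun x => φ (x * g)
  one_smul φ := funext fun x => congrArg φ (mul_one x)
  mul_smul g h φ := funext fun x => congrArg φ (mul_assoc x g h).symm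
  smul_zero _ := rfl
  smul_add _ _ _ := rfl

lemma coind_smul_apply {G M : Type} [Group G] [AddCommGroup M] (g : G) (φ : Coind G M) (x : G) :
    (g • φ) x = φ (x * g) := rfl

lemma coind_smul_apply_sub {G : Type} [Group G] {H : Subgroup G} {M : Type} [AddCommGroup M]
    (h : H) (φ : Coind G M) (x : G) : (h • φ) x = φ (x * (h : G)) := rfl

/-- Embedding of `M` into its coinduced module. -/
def iota (G M : Type) [Group G] [AddCommGroup M] [DistribMulAction G M] : M →+ Coind G M where
  toFun m := fun x => x • m
  map_zero' := funext fun x => smul_zero x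
  map_add' a b := funext fun x => smul_add x a b

lemma iota_equivariant {G M : Type} [Group G] [AddCommGroup M] [DistribMulAction G M]
    (g : G) (m : M) : iota G M (g • m) = g • iota G M m :=
  funext fun x => (mul_smul x g m).symm

lemma iota_injective {G M : Type} [Group G] [AddCommGroup M] [DistribMulAction G M] :
    Function.Injective (iota G M) := fun a b hab => by
  have h1 : (1 : G) • a = (1 : G) • b := congrFun hab 1
  simpa using h1

/-- Quotient of the coinduced module by `M`. -/
def CoQ (G M : Type) [Group G] [AddCommGroup M] [DistribMulAction G M] : Type :=
  Coind G M ⧸ (iota G M).range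

instance (G M : Type) [Group G] [AddCommGroup M] [DistribMulAction G M] :
    AddCommGroup (CoQ G M) := QuotientAddGroup.Quotient.addCommGroup _

lemma iota_range_stable {G M : Type} [Group G] [AddCommGroup M] [DistribMulAction G M] (g : G) :
    ∀ v ∈ (iota G M).range, g • v ∈ (iota G M).range := by
  rintro v ⟨m, rfl⟩
  exact ⟨g • m, iota_equivariant g m⟩

instance coqSMul (G M : Type) [Group G] [AddCommGroup M] [DistribMulAction G M] :
    SMul G (CoQ G M) :=
  ⟨fun g => QuotientAddGroup.map _ _ (DistribMulAction.toAddMonoidHom (Coind G M) g)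
    (fun v hv => AddSubgroup.mem_comap.mpr (iota_range_stable g v hv))⟩

/-- The quotient map as a function into `CoQ`. -/
def coqMk {G M : Type} [Group G] [AddCommGroup M] [DistribMulAction G M] (v : Coind G M) :
    CoQ G M := QuotientAddGroup.mk v

lemma coq_smul_mk {G M : Type} [Group G] [AddCommGroup M] [DistribMulAction G M]
    (g : G) (v : Coind G M) :
    g • coqMk v = coqMk (g • v) :=
  QuotientAddGroup.map_mk _ _ _ _ _

noncomputable instance coqAction (G M : Type) [Group G] [AddCommGroup M] [DistribMulAction G M] :
    DistribMulAction G (CoQ G M) :=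
  Function.Surjective.distribMulAction (QuotientAddGroup.mk' (iota G M).range)
    (QuotientAddGroup.mk'_surjective _) (fun g v => (coq_smul_mk g v).symm)

/-- Projection onto the quotient. -/
def proj (G M : Type) [Group G] [AddCommGroup M] [DistribMulAction G M] :
    Coind G M →+ CoQ G M := QuotientAddGroup.mk' (iota G M).range

lemma proj_equivariant {G M : Type} [Group G] [AddCommGroup M] [DistribMulAction G M]
    (g : G) (v : Coind G M) : proj G M (g • v) = g • proj G M v := rfl

lemma proj_surjective {G M : Type} [Group G] [AddCommGroup M] [DistribMulAction G M] :
    Function.Surjective (proj G M) := QuotientAddGroup.mk'_surjective _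

lemma proj_iota {G M : Type} [Group G] [AddCommGroup M] [DistribMulAction G M] (m : M) :
    proj G M (iota G M m) = 0 := by
  apply (QuotientAddGroup.eq_zero_iff _).mpr
  exact ⟨m, rfl⟩

lemma proj_eq_zero_iff {G M : Type} [Group G] [AddCommGroup M] [DistribMulAction G M]
    (v : Coind G M) : proj G M v = 0 ↔ v ∈ (iota G M).range :=
  QuotientAddGroup.eq_zero_iff _

section Invariants

variable {G : Type} [Group G] (H : Subgroup G) [H.Normal] {A B : Type}
  [AddCommGroup A] [DistribMulAction G A] [AddCommGroup B] [DistribMulAction G B]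

lemma hinv_smul_coe (g : G) (x : Hinvariants G H A) :
    (((QuotientGroup.mk g : G ⧸ H) • x : Hinvariants G H A) : A) = g • (x : A) := rfl

/-- The map induced on `H`-invariants by an equivariant map. -/
def invMap (φ : A →+ B) (hφ : ∀ (g : G) (a : A), φ (g • a) = g • φ a) :
    Hinvariants G H A →+ Hinvariants G H B where
  toFun a := ⟨φ a, fun h => by rw [← hφ, a.2 h]⟩
  map_zero' := Subtype.ext (map_zero φ)
  map_add' a b := Subtype.ext (map_add φ _ _)

lemma invMap_coe (φ : A →+ B) (hφ : ∀ (g : G) (a : A), φ (g • a) = g • φ a)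
    (x : Hinvariants G H A) : (invMap H φ hφ x : B) = φ (x : A) := rfl

lemma invMap_equivariant (φ : A →+ B) (hφ : ∀ (g : G) (a : A), φ (g • a) = g • φ a)
    (c : G ⧸ H) (x : Hinvariants G H A) :
    invMap H φ hφ (c • x) = c • invMap H φ hφ x := by
  induction c using QuotientGroup.induction_on with
  | H g => exact Subtype.ext (hφ g (x : A))

lemma invMap_injective (φ : A →+ B) (hφ : ∀ (g : G) (a : A), φ (g • a) = g • φ a)
    (h : Function.Injective φ) : Function.Injective (invMap H φ hφ) := by
  intro a b hab
  exact Subtype.ext (h (congrArg Subtype.val hab))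

lemma inv_eval (φ : Hinvariants G H (Coind G A)) (x h : G) (hh : h ∈ H) :
    (φ : Coind G A) (x * h) = (φ : Coind G A) x :=
  congrFun (φ.2 ⟨h, hh⟩) x

/-- The `H`-invariants of the coinduced module are coinduced for `G ⧸ H`. -/
noncomputable def invCoindEquiv : Hinvariants G H (Coind G A) ≃+ ((G ⧸ H) → A) where
  toFun φ := fun c => (φ : Coind G A) c.out
  invFun ψ := ⟨fun x => ψ (QuotientGroup.mk x), fun h => funext fun x => by
    show ψ (QuotientGroup.mk (x * (h : G))) = ψ (QuotientGroup.mk x)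
    rw [QuotientGroup.mk_mul_of_mem x h.2]⟩
  left_inv φ := Subtype.ext (funext fun x => by
    show (φ : Coind G A) (QuotientGroup.mk x).out = (φ : Coind G A) x
    have h0 : x⁻¹ * (QuotientGroup.mk x : G ⧸ H).out ∈ H :=
      QuotientGroup.eq.mp (QuotientGroup.out_eq' (QuotientGroup.mk x)).symm
    have := inv_eval H φ x _ h0
    rwa [mul_inv_cancel_left] at this)
  right_inv ψ := funext fun c => congrArg ψ (QuotientGroup.out_eq' c)
  map_add' φ₁ φ₂ := rfl

end Invariants

section AcycInst

variable {G : Type} [Group G] {M : Type} [AddCommGroup M] [DistribMulAction G M]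

/-- `Coind G M` is additively just `G → M`. -/
def coindSelfEquiv (G M : Type) [AddCommGroup M] : Coind G M ≃+ (G → M) :=
  AddEquiv.refl (G → M)

lemma acyc_G (n : ℕ) (f : C G (Coind G M) (n+1))
    (hf : dPlus G (Coind G M) (n+1) f = 0) :
    f ∈ (dPlus G (Coind G M) n).range :=
  acyc (V := Coind G M) (X := G) (A := M) (coindSelfEquiv G M)
    (fun x γ => x * γ) (fun x => x) (fun _ => 1)
    (fun _ _ _ => by rfl) (fun x => one_mul x) (fun _ _ => rfl) (fun _ _ => rfl) n f hf

lemma acyc_H (H : Subgroup G) (n : ℕ) (f : C H (Coind G M) (n+1))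
    (hf : dPlus H (Coind G M) (n+1) f = 0) :
    f ∈ (dPlus H (Coind G M) n).range := by
  refine acyc (V := Coind G M) (X := G) (A := M) (coindSelfEquiv G M)
    (fun x (h : H) => x * (h : G))
    (fun x => ⟨(QuotientGroup.mk x : G ⧸ H).out⁻¹ * x,
      QuotientGroup.eq.mp (QuotientGroup.out_eq' (QuotientGroup.mk x))⟩)
    (fun x => (QuotientGroup.mk x : G ⧸ H).out)
    (fun _ _ _ => by rfl) (fun x => mul_inv_cancel_left _ _) ?_ ?_ n f hf
  · intro x h
    apply Subtype.ext
    show (QuotientGroup.mk (x * (h : G)) : G ⧸ H).out⁻¹ * (x * (h : G)) = _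
    rw [QuotientGroup.mk_mul_of_mem x h.2]
    show _ = ((QuotientGroup.mk x : G ⧸ H).out⁻¹ * x) * (h : G)
    rw [mul_assoc]
  · intro x h
    show (QuotientGroup.mk (x * (h : G)) : G ⧸ H).out = _
    rw [QuotientGroup.mk_mul_of_mem x h.2]

lemma acyc_QH (H : Subgroup G) [H.Normal] (n : ℕ)
    (f : C (G ⧸ H) (Hinvariants G H (Coind G M)) (n+1))
    (hf : dPlus (G ⧸ H) (Hinvariants G H (Coind G M)) (n+1) f = 0) :
    f ∈ (dPlus (G ⧸ H) (Hinvariants G H (Coind G M)) n).range := by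
  refine acyc (X := G ⧸ H) (A := M) (invCoindEquiv H)
    (fun c γ => c * γ) (fun c => c) (fun _ => 1)
    ?_ (fun c => one_mul c) (fun _ _ => rfl) (fun _ _ => rfl) n f hf
  intro γ v c
  induction γ using QuotientGroup.induction_on with
  | H g =>
    have hmk : (QuotientGroup.mk (c.out * g) : G ⧸ H) = c * QuotientGroup.mk g := by
      rw [QuotientGroup.mk_mul, QuotientGroup.out_eq']
    have h0 : (c.out * g)⁻¹ * (c * QuotientGroup.mk g).out ∈ H :=
      QuotientGroup.eq.mp (hmk.trans (QuotientGroup.out_eq' _).symm)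
    have key := inv_eval H v (c.out * g)
      ((c.out * g)⁻¹ * (c * QuotientGroup.mk g).out) h0
    rw [mul_inv_cancel_left] at key
    exact key.symm

end AcycInst

section LowDegree

variable {Γ A : Type} [Group Γ] [AddCommGroup A] [DistribMulAction Γ A]

lemma fin1_const (γ : Fin 1 → Γ) : γ = fun _ => γ 0 :=
  funext fun i => congrArg γ (Subsingleton.elim i 0)

lemma dPlus_zero_apply (f : C Γ A 0) (γ : Fin 1 → Γ) :
    dPlus Γ A 0 f γ = γ 0 • f ![] - f ![] := by
  rw [dPlus_apply, Fin.sum_univ_succ, Fin.sum_univ_zero]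
  have h1 : (fun i => γ i.succ) = (![] : Fin 0 → Γ) := funext fun i => i.elim0
  have h2 : Fin.contractNth 0 (· * ·) γ = (![] : Fin 0 → Γ) := funext fun i => i.elim0
  rw [h1, h2]
  simp [sub_eq_add_neg]

lemma dPlus_one_apply (f : C Γ A 1) (γ : Fin 2 → Γ) :
    dPlus Γ A 1 f γ
      = γ 0 • f (fun _ => γ 1) - f (fun _ => γ 0 * γ 1) + f (fun _ => γ 0) := by
  rw [dPlus_apply, Fin.sum_univ_succ, Fin.sum_univ_succ, Fin.sum_univ_zero]
  have h1 : (fun i : Fin 1 => γ i.succ) = (fun _ : Fin 1 => γ 1) := by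
    rw [fin1_const (fun i : Fin 1 => γ i.succ)]; rfl
  have h2 : Fin.contractNth 0 (· * ·) γ = (fun _ : Fin 1 => γ 0 * γ 1) := by
    rw [fin1_const (Fin.contractNth 0 (· * ·) γ)]
    funext i
    rw [Fin.contractNth_apply_of_eq _ _ _ _ rfl]
    rfl
  have h3 : Fin.contractNth (Fin.succ 0) (· * ·) γ = (fun _ : Fin 1 => γ 0) := by
    rw [fin1_const (Fin.contractNth (Fin.succ 0) (· * ·) γ)]
    funext i
    rw [Fin.contractNth_apply_of_lt _ _ _ _ (by simp)]
    rfl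
  rw [h1, h2, h3]
  simp [sub_eq_add_neg]
  abel

lemma cocycle_one_rel (f : C Γ A 1) (hf : dPlus Γ A 1 f = 0) (a b : Γ) :
    f (fun _ => a * b) = a • f (fun _ => b) + f (fun _ => a) := by
  have h := congrFun hf ![a, b]
  rw [dPlus_one_apply, Pi.zero_apply] at h
  simp only [Matrix.cons_val_zero, Matrix.cons_val_one, Matrix.head_cons] at h
  calc f (fun _ => a * b)
      = a • f (fun _ => b) + f (fun _ => a)
        - (a • f (fun _ => b) - f (fun _ => a * b) + f (fun _ => a)) := by abel
    _ = _ := by rw [h]; abel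

lemma cocycle_one_at_one (f : C Γ A 1) (hf : dPlus Γ A 1 f = 0) :
    f (fun _ => (1 : Γ)) = 0 := by
  have h := cocycle_one_rel f hf 1 1
  rw [one_smul] at h
  rw [show (fun _ : Fin 1 => (1 : Γ) * 1) = (fun _ : Fin 1 => (1 : Γ)) from
    funext fun _ => one_mul 1] at h
  exact left_eq_add.mp h

end LowDegree

section Commutation

variable {G : Type} [Group G] {H : Subgroup G} [H.Normal] {M N : Type}
  [AddCommGroup M] [DistribMulAction G M] [AddCommGroup N] [DistribMulAction G N]

lemma dPlus_res (r : ℕ) (f : C G M r) :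
    dPlus H M r (restrictionC G H M r f) = restrictionC G H M (r+1) (dPlus G M r f) :=
  dPlus_compat (fun h : H => (h : G)) (fun _ _ => rfl) (AddMonoidHom.id M)
    (fun _ _ => rfl) r f

lemma dPlus_inf (r : ℕ) (f : C (G ⧸ H) (Hinvariants G H M) r) :
    dPlus G M r (inflationC G H M r f)
      = inflationC G H M (r+1) (dPlus (G ⧸ H) (Hinvariants G H M) r f) :=
  dPlus_compat (QuotientGroup.mk : G → G ⧸ H) (fun _ _ => rfl)
    (Hinvariants G H M).subtype (fun _ _ => rfl) r f

lemma dPlus_post {Γ : Type} [Group Γ] {A B : Type} [AddCommGroup A] [DistribMulAction Γ A]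
    [AddCommGroup B] [DistribMulAction Γ B] (φ : A →+ B)
    (hφ : ∀ (g : Γ) (a : A), φ (g • a) = g • φ a) (r : ℕ) (f : C Γ A r) :
    dPlus Γ B r (fun γ => φ (f γ)) = fun γ => φ (dPlus Γ A r f γ) :=
  dPlus_compat (id : Γ → Γ) (fun _ _ => rfl) φ hφ r f

end Commutation

section LiftFactor

lemma lift_fn {V N X : Type} (p : V → N) (hp : Function.Surjective p) (c : X → N) :
    ∃ d : X → V, ∀ x, p (d x) = c x :=
  ⟨fun x => Function.surjInv hp (c x), fun x => Function.surjInv_eq hp (c x)⟩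

lemma factor_fn {M V N X : Type} [Zero N] (ι : M → V) (p : V → N)
    (hexact : ∀ v, p v = 0 → ∃ m, ι m = v) (w : X → V) (hw : ∀ x, p (w x) = 0) :
    ∃ k : X → M, ∀ x, ι (k x) = w x := by
  choose k hk using fun x => hexact (w x) (hw x)
  exact ⟨k, hk⟩

lemma coq_exact {G M : Type} [Group G] [AddCommGroup M] [DistribMulAction G M]
    (v : Coind G M) (hv : proj G M v = 0) : ∃ m, iota G M m = v := by
  rcases (proj_eq_zero_iff v).mp hv with ⟨m, hm⟩
  exact ⟨m, hm⟩

end LiftFactor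

section Exactness

variable {G : Type} [Group G] {H : Subgroup G} [H.Normal] {M : Type}
  [AddCommGroup M] [DistribMulAction G M]

lemma iota_equivariant_H (h : H) (a : M) :
    iota G M (h • a) = h • iota G M a := iota_equivariant (h : G) a

lemma proj_equivariant_H (h : H) (v : Coind G M) :
    proj G M (h • v) = h • proj G M v := rfl

lemma inv_exact (x : Hinvariants G H (Coind G M))
    (hx : invMap H (proj G M) (fun g v => proj_equivariant g v) x = 0) :
    ∃ m : Hinvariants G H M, invMap H (iota G M) (fun g a => iota_equivariant g a) m = x := by
  have h0 : proj G M (x : Coind G M) = 0 := congrArg Subtype.val hx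
  rcases coq_exact _ h0 with ⟨m, hm⟩
  have hminv : ∀ h : H, (h : G) • m = m := by
    intro h
    apply iota_injective (G := G)
    rw [iota_equivariant, hm]
    exact x.2 h
  exact ⟨⟨m, hminv⟩, Subtype.ext hm⟩

lemma projInv_surj (hv1 : ∀ f ∈ (dPlus H M 1).ker, f ∈ cobound H M 1)
    (n : Hinvariants G H (CoQ G M)) :
    ∃ v : Hinvariants G H (Coind G M),
      invMap H (proj G M) (fun g v => proj_equivariant g v) v = n := by
  rcases proj_surjective (G := G) (M := M) (n : CoQ G M) with ⟨φ, hφ⟩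
  have hdiff : ∀ h : H, ∃ m : M, iota G M m = (h : G) • φ - φ := by
    intro h
    apply coq_exact
    rw [map_sub, proj_equivariant, hφ, n.2 h, sub_self]
  choose c0 hc0 using hdiff
  set c : C H M 1 := fun γ => c0 (γ 0) with hc
  have hker : c ∈ (dPlus H M 1).ker := by
    apply AddMonoidHom.mem_ker.mpr
    funext γ
    apply iota_injective (G := G)
    rw [dPlus_one_apply, Pi.zero_apply, map_zero (iota G M)]
    rw [map_add, map_sub, iota_equivariant_H]
    simp only [hc]
    rw [hc0, hc0, hc0]
    have hmul : ((γ 0 * γ 1 : H) : G) = (γ 0 : G) * (γ 1 : G) := rfl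
    show (γ 0 : G) • ((γ 1 : G) • φ - φ) - (((γ 0 * γ 1 : H) : G) • φ - φ)
        + ((γ 0 : G) • φ - φ) = 0
    rw [hmul, smul_sub, mul_smul]
    abel
  rcases hv1 c hker with ⟨m0, hm0⟩
  set m := m0 ![] with hm
  have h2 : ∀ h : H, c0 h = (h : G) • m - m := by
    intro h
    have h3 := congrFun hm0 (fun _ => h)
    rw [dPlus_zero_apply] at h3
    exact h3.symm
  refine ⟨⟨φ - iota G M m, ?_⟩, Subtype.ext ?_⟩
  · intro h
    have e1 : (h : G) • φ - φ = iota G M ((h : G) • m) - iota G M m := by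
      rw [← map_sub, ← h2, hc0]
    rw [smul_sub, ← iota_equivariant]
    exact sub_eq_sub_iff_sub_eq_sub.mp e1
  · show proj G M (φ - iota G M m) = (n : CoQ G M)
    rw [map_sub, hφ, proj_iota, sub_zero]

lemma hvanish_coq (r : ℕ)
    (hvan : ∀ i, 0 < i → i < r + 2 → Subsingleton (Hcoh H M i)) :
    ∀ i, 0 < i → i < r + 1 → Subsingleton (Hcoh H (CoQ G M) i) := by
  intro i hi hir
  rw [hcoh_subsingleton_iff]
  intro z hz
  obtain ⟨i', rfl⟩ : ∃ i', i = i' + 1 := ⟨i - 1, by omega⟩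
  rcases lift_fn (proj G M) proj_surjective z with ⟨cc, hcc⟩
  have hpost := dPlus_post (Γ := H) (proj G M) (fun g v => proj_equivariant_H g v) (i'+1) cc
  have hzd : dPlus H (CoQ G M) (i'+1) z = 0 := AddMonoidHom.mem_ker.mp hz
  have hw : ∀ γ, proj G M (dPlus H (Coind G M) (i'+1) cc γ) = 0 := by
    intro γ
    have h4 : (fun γ => proj G M (cc γ)) = z := funext hcc
    rw [← congrFun hpost γ, h4, hzd]
    rfl
  rcases factor_fn (iota G M) (proj G M) coq_exact _ hw with ⟨y, hy⟩
  have hy_ker : y ∈ (dPlus H M (i'+2)).ker := by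
    apply AddMonoidHom.mem_ker.mpr
    funext γ
    apply iota_injective (G := G)
    have h5 := dPlus_post (Γ := H) (iota G M) (fun g v => iota_equivariant_H g v) (i'+2) y
    have h6 : (fun γ => iota G M (y γ)) = dPlus H (Coind G M) (i'+1) cc := funext hy
    rw [Pi.zero_apply, map_zero (iota G M), ← congrFun h5 γ, h6, d_sq]
    rfl
  rcases (hcoh_subsingleton_iff _ _ _).mp (hvan (i'+2) (by omega) (by omega)) y hy_ker
    with ⟨e, he⟩
  have hcoc : dPlus H (Coind G M) (i'+1) (fun γ => cc γ - iota G M (e γ)) = 0 := by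
    have h9 : (fun γ => cc γ - iota G M (e γ)) = cc - (fun γ => iota G M (e γ)) := rfl
    rw [h9, map_sub]
    have h7 := dPlus_post (Γ := H) (iota G M) (fun g v => iota_equivariant_H g v) (i'+1) e
    funext γ
    rw [Pi.sub_apply, congrFun h7 γ, congrFun he γ, hy γ, sub_self, Pi.zero_apply]
  rcases acyc_H H i' _ hcoc with ⟨w, hw2⟩
  refine (mem_cobound_succ i' z).mpr ⟨fun γ => proj G M (w γ), ?_⟩
  have h8 := dPlus_post (Γ := H) (proj G M) (fun g v => proj_equivariant_H g v) i' w
  rw [h8]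
  funext γ
  rw [hw2]
  show proj G M (cc γ - iota G M (e γ)) = z γ
  rw [map_sub, proj_iota, sub_zero]
  exact hcc γ
end Exactness

section Base

variable (G : Type) [Group G] (H : Subgroup G) [H.Normal] (M : Type)
  [AddCommGroup M] [DistribMulAction G M]

lemma part3_base (f' : C (G ⧸ H) (Hinvariants G H M) 1)
    (hf' : f' ∈ (dPlus (G ⧸ H) (Hinvariants G H M) 1).ker)
    (hinf : inflationC G H M 1 f' ∈ cobound G M 1) :
    f' ∈ cobound (G ⧸ H) (Hinvariants G H M) 1 := by
  rcases hinf with ⟨m0, hm0⟩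
  set m := m0 ![] with hmdef
  have hfker : dPlus (G ⧸ H) (Hinvariants G H M) 1 f' = 0 := AddMonoidHom.mem_ker.mp hf'
  have hone : f' (fun _ => (1 : G ⧸ H)) = 0 := cocycle_one_at_one f' hfker
  have hm_inv : ∀ h : H, (h : G) • m = m := by
    intro h
    have h1 := congrFun hm0 (fun _ => (h : G))
    rw [dPlus_zero_apply] at h1
    have h2 : inflationC G H M 1 f' (fun _ => (h : G)) = 0 := by
      show ((f' (fun _ => QuotientGroup.mk (h : G))) : M) = 0
      have h3 : (QuotientGroup.mk (h : G) : G ⧸ H) = 1 := (QuotientGroup.eq_one_iff _).mpr h.2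
      rw [show (fun _ : Fin 1 => (QuotientGroup.mk (h : G) : G ⧸ H))
        = (fun _ : Fin 1 => (1 : G ⧸ H)) from funext fun _ => h3, hone]
      rfl
    rw [h2] at h1
    exact sub_eq_zero.mp h1
  refine (mem_cobound_succ 0 f').mpr ⟨fun _ => ⟨m, hm_inv⟩, ?_⟩
  funext γ
  rw [dPlus_zero_apply]
  have h4 : f' γ = f' (fun _ => γ 0) := congrArg f' (fin1_const γ)
  rw [h4]
  induction (γ 0) using QuotientGroup.induction_on with
  | H g =>
    apply Subtype.ext
    have h5 : (((QuotientGroup.mk g : G ⧸ H) • (⟨m, hm_inv⟩ : Hinvariants G H M)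
        - ⟨m, hm_inv⟩ : Hinvariants G H M) : M) = g • m - m := rfl
    rw [h5]
    have h6 : ((f' (fun _ => (QuotientGroup.mk g : G ⧸ H))) : M)
        = inflationC G H M 1 f' (fun _ => g) := rfl
    rw [h6, ← hm0, dPlus_zero_apply]

lemma part5_base (f : C G M 1) (hf : f ∈ (dPlus G M 1).ker)
    (hres : restrictionC G H M 1 f ∈ cobound H M 1) :
    ∃ f' ∈ (dPlus (G ⧸ H) (Hinvariants G H M) 1).ker,
      f - inflationC G H M 1 f' ∈ cobound G M 1 := by
  rcases hres with ⟨c0, hc0⟩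
  set m₁ := c0 ![] with hm₁
  set f₁ : C G M 1 := f - dPlus G M 0 (fun _ => m₁) with hf₁
  have hf₁ker : dPlus G M 1 f₁ = 0 := by
    rw [hf₁, map_sub, AddMonoidHom.mem_ker.mp hf, d_sq]
    simp
  have hH0 : ∀ g : G, g ∈ H → f₁ (fun _ => g) = 0 := by
    intro g hg
    have h1 := congrFun hc0 (fun _ => (⟨g, hg⟩ : H))
    rw [dPlus_zero_apply] at h1
    have h2 : f₁ (fun _ => g) = f (fun _ => g) - (g • m₁ - m₁) := by
      rw [hf₁, Pi.sub_apply, dPlus_zero_apply]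
    rw [h2]
    have h3 : restrictionC G H M 1 f (fun _ => (⟨g, hg⟩ : H)) = f (fun _ => g) := rfl
    rw [← h3, ← h1]
    show ((⟨g, hg⟩ : H) : G) • m₁ - m₁ - (g • m₁ - m₁) = 0
    exact sub_self _
  have hrel := cocycle_one_rel f₁ hf₁ker
  have hcoset : ∀ (x y : G), (QuotientGroup.mk x : G ⧸ H) = QuotientGroup.mk y →
      f₁ (fun _ => x) = f₁ (fun _ => y) := by
    intro x y hxy
    have hmem : x⁻¹ * y ∈ H := QuotientGroup.eq.mp hxy
    have h5 := hrel x (x⁻¹ * y)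
    rw [hH0 _ hmem, smul_zero, zero_add] at h5
    rw [show (fun _ : Fin 1 => x * (x⁻¹ * y)) = (fun _ : Fin 1 => y) from
      funext fun _ => by rw [mul_inv_cancel_left]] at h5
    exact h5.symm
  have hval : ∀ (x : G) (h : H), (h : G) • f₁ (fun _ => x) = f₁ (fun _ => x) := by
    intro x h
    have h6 := hrel (h : G) x
    rw [hH0 _ h.2, add_zero] at h6
    have h7 : (QuotientGroup.mk ((h : G) * x) : G ⧸ H) = QuotientGroup.mk x := by
      rw [QuotientGroup.mk_mul, (QuotientGroup.eq_one_iff _).mpr h.2, one_mul]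
    rw [← h6, hcoset _ _ h7]
  set f' : C (G ⧸ H) (Hinvariants G H M) 1 :=
    fun γ => ⟨f₁ (fun _ => (γ 0).out), fun h => hval _ h⟩ with hf'def
  have hinf_eq : inflationC G H M 1 f' = f₁ := by
    funext γ
    show f₁ (fun _ => (QuotientGroup.mk (γ 0) : G ⧸ H).out) = f₁ γ
    rw [hcoset _ _ (QuotientGroup.out_eq' _)]
    exact congrArg f₁ (fin1_const γ).symm
  refine ⟨f', ?_, ?_⟩
  · apply AddMonoidHom.mem_ker.mpr
    funext γ
    rw [dPlus_one_apply, Pi.zero_apply]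
    apply Subtype.ext
    have hco : ((γ 0 • f' (fun _ => γ 1) - f' (fun _ => γ 0 * γ 1)
          + f' (fun _ => γ 0) : Hinvariants G H M) : M)
        = (γ 0).out • f₁ (fun _ => (γ 1).out) - f₁ (fun _ => (γ 0 * γ 1).out)
          + f₁ (fun _ => (γ 0).out) := by
      have hsm : ((γ 0 • f' (fun _ => γ 1) : Hinvariants G H M) : M)
          = (γ 0).out • ((f' (fun _ => γ 1) : Hinvariants G H M) : M) := by
        conv_lhs => rw [show γ 0 = QuotientGroup.mk (γ 0).out from (QuotientGroup.out_eq' _).symm]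
        exact hinv_smul_coe H _ _
      rw [AddSubgroup.coe_add, AddSubgroup.coe_sub, hsm]
    rw [hco]
    have h8 : (QuotientGroup.mk ((γ 0 * γ 1).out) : G ⧸ H)
        = QuotientGroup.mk ((γ 0).out * (γ 1).out) := by
      rw [(QuotientGroup.out_eq' (γ 0 * γ 1)), QuotientGroup.mk_mul,
        QuotientGroup.out_eq', QuotientGroup.out_eq']
    rw [hcoset _ _ h8, hrel ((γ 0).out) ((γ 1).out)]
    show _ = ((0 : Hinvariants G H M) : M)
    rw [ZeroMemClass.coe_zero]
    abel
  · refine (mem_cobound_succ 0 _).mpr ⟨(fun _ => m₁), ?_⟩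
    rw [hinf_eq, hf₁]
    abel

end Base

lemma part3gen (k : ℕ) : ∀ (G : Type) [Group G] (H : Subgroup G) [H.Normal] (M : Type)
    [AddCommGroup M] [DistribMulAction G M],
    (∀ i, 0 < i → i < k + 1 → Subsingleton (Hcoh H M i)) →
    ∀ f' ∈ (dPlus (G ⧸ H) (Hinvariants G H M) (k + 1)).ker,
      inflationC G H M (k + 1) f' ∈ cobound G M (k + 1) →
      f' ∈ cobound (G ⧸ H) (Hinvariants G H M) (k + 1) := by
  induction k with
  | zero =>
    intro G _ H _ M _ _ _ f' hf' hinf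
    exact part3_base G H M f' hf' hinf
  | succ k ih =>
    intro G _ H _ M _ _ hvan f' hf' hinf
    set ιH := invMap H (iota G M) (fun g a => iota_equivariant g a) with hιH
    set pH := invMap H (proj G M) (fun g v => proj_equivariant g v) with hpH
    rcases (mem_cobound_succ _ _).mp hinf with ⟨kk, hkk⟩
    have h1 : dPlus (G ⧸ H) (Hinvariants G H (Coind G M)) (k+2) (fun γ => ιH (f' γ)) = 0 := by
      rw [dPlus_post ιH (fun c x => invMap_equivariant H _ _ c x) (k+2) f',
        AddMonoidHom.mem_ker.mp hf']
      funext γ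
      rw [Pi.zero_apply, map_zero, Pi.zero_apply]
    rcases acyc_QH H (k+1) _ h1 with ⟨ub, hub⟩
    set v' : C (G ⧸ H) (Hinvariants G H (CoQ G M)) (k+1) := fun γ => pH (ub γ) with hv'
    have h2 : v' ∈ (dPlus (G ⧸ H) (Hinvariants G H (CoQ G M)) (k+1)).ker := by
      apply AddMonoidHom.mem_ker.mpr
      rw [hv', dPlus_post pH (fun c x => invMap_equivariant H _ _ c x) (k+1) ub, hub]
      funext γ
      apply Subtype.ext
      show proj G M (iota G M _) = _
      rw [proj_iota]
      rfl
    have hinfcomm : inflationC G H (Coind G M) (k+2) (fun γ => ιH (f' γ))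
        = fun γ => iota G M (inflationC G H M (k+2) f' γ) := rfl
    have h3 : dPlus G (Coind G M) (k+1)
        (inflationC G H (Coind G M) (k+1) ub - fun γ => iota G M (kk γ)) = 0 := by
      rw [map_sub, dPlus_inf (k+1) ub, hub, hinfcomm,
        dPlus_post (iota G M) (fun g a => iota_equivariant g a) (k+1) kk, hkk]
      exact sub_self _
    rcases acyc_G k _ h3 with ⟨w, hw⟩
    have h4 : inflationC G H (CoQ G M) (k+1) v' ∈ cobound G (CoQ G M) (k+1) := by
      refine (mem_cobound_succ k _).mpr ⟨fun γ => proj G M (w γ), ?_⟩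
      rw [dPlus_post (proj G M) (fun g v => proj_equivariant g v) k w]
      funext γ
      rw [hw]
      show proj G M (inflationC G H (Coind G M) (k+1) ub γ - iota G M (kk γ)) = _
      rw [map_sub, proj_iota, sub_zero]
      rfl
    have hvanQ := hvanish_coq (H := H) k hvan
    have h5 := ih G H (CoQ G M) hvanQ v' h2 h4
    rcases (mem_cobound_succ _ _).mp h5 with ⟨nb, hnb⟩
    have hv1 : ∀ f0 ∈ (dPlus H M 1).ker, f0 ∈ cobound H M 1 :=
      (hcoh_subsingleton_iff H M 1).mp (hvan 1 one_pos (by omega))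
    have hpHsurj : Function.Surjective pH := fun n => projInv_surj hv1 n
    rcases lift_fn pH hpHsurj nb with ⟨mb, hmb⟩
    have h6 : ∀ γ, pH ((ub - dPlus (G ⧸ H) (Hinvariants G H (Coind G M)) k mb) γ) = 0 := by
      intro γ
      rw [Pi.sub_apply, map_sub]
      have h7 := dPlus_post pH (fun c x => invMap_equivariant H _ _ c x) k mb
      have h8 : (fun γ => pH (mb γ)) = nb := funext hmb
      rw [← congrFun h7 γ, h8, hnb]
      show v' γ - v' γ = 0
      exact sub_self _
    rcases factor_fn ιH pH (fun x hx => inv_exact x hx) _ h6 with ⟨e, he⟩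
    refine (mem_cobound_succ _ _).mpr ⟨e, ?_⟩
    funext γ
    apply invMap_injective H (iota G M) (fun g a => iota_equivariant g a) iota_injective
    rw [← hιH]
    have h9 := dPlus_post ιH (fun c x => invMap_equivariant H _ _ c x) (k+1) e
    rw [← congrFun h9 γ,
      show (fun γ => ιH (e γ)) = ub - dPlus (G ⧸ H) (Hinvariants G H (Coind G M)) k mb
        from funext he,
      map_sub, Pi.sub_apply, hub, d_sq]
    show ιH (f' γ) - (0 : C (G ⧸ H) (Hinvariants G H (Coind G M)) (k+2)) γ = ιH (f' γ)
    rw [Pi.zero_apply, sub_zero]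

lemma part5gen (k : ℕ) : ∀ (G : Type) [Group G] (H : Subgroup G) [H.Normal] (M : Type)
    [AddCommGroup M] [DistribMulAction G M],
    (∀ i, 0 < i → i < k + 1 → Subsingleton (Hcoh H M i)) →
    ∀ f ∈ (dPlus G M (k + 1)).ker,
      restrictionC G H M (k + 1) f ∈ cobound H M (k + 1) →
      ∃ f' ∈ (dPlus (G ⧸ H) (Hinvariants G H M) (k + 1)).ker,
        f - inflationC G H M (k + 1) f' ∈ cobound G M (k + 1) := by
  induction k with
  | zero =>
    intro G _ H _ M _ _ _ f hfk hres
    exact part5_base G H M f hfk hres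
  | succ k ih =>
    intro G _ H _ M _ _ hvan f hfk hres
    set ιH := invMap H (iota G M) (fun g a => iota_equivariant g a) with hιH
    set pH := invMap H (proj G M) (fun g v => proj_equivariant g v) with hpH
    rcases (mem_cobound_succ _ _).mp hres with ⟨c, hc⟩
    -- Step 1: lift f into the coinduced module
    have h1 : dPlus G (Coind G M) (k+2) (fun γ => iota G M (f γ)) = 0 := by
      rw [dPlus_post (iota G M) (fun g a => iota_equivariant g a) (k+2) f,
        AddMonoidHom.mem_ker.mp hfk]
      funext γ
      rw [Pi.zero_apply, map_zero, Pi.zero_apply]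
    rcases acyc_G (k+1) _ h1 with ⟨u, hu⟩
    -- Step 2: v := proj ∘ u is a cocycle with values in CoQ
    set v : C G (CoQ G M) (k+1) := fun γ => proj G M (u γ) with hvdef
    have h2 : v ∈ (dPlus G (CoQ G M) (k+1)).ker := by
      apply AddMonoidHom.mem_ker.mpr
      rw [hvdef, dPlus_post (proj G M) (fun g w => proj_equivariant g w) (k+1) u, hu]
      funext γ
      rw [proj_iota, Pi.zero_apply]
    -- Step 3: res v is a coboundary
    have h3 : dPlus H (Coind G M) (k+1)
        (restrictionC G H (Coind G M) (k+1) u - fun γ => iota G M (c γ)) = 0 := by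
      rw [map_sub, dPlus_res (k+1) u, hu,
        dPlus_post (iota G M) (fun h a => iota_equivariant_H h a) (k+1) c, hc]
      funext γ
      rw [Pi.sub_apply]
      show iota G M (restrictionC G H M (k+2) f γ) - iota G M (restrictionC G H M (k+2) f γ) = 0
      exact sub_self _
    rcases acyc_H H k _ h3 with ⟨w, hw⟩
    have h4 : restrictionC G H (CoQ G M) (k+1) v ∈ cobound H (CoQ G M) (k+1) := by
      refine (mem_cobound_succ k _).mpr ⟨fun γ => proj G M (w γ), ?_⟩
      rw [dPlus_post (proj G M) (fun h x => proj_equivariant_H h x) k w]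
      funext γ
      rw [hw]
      show proj G M (restrictionC G H (Coind G M) (k+1) u γ - iota G M (c γ))
        = restrictionC G H (CoQ G M) (k+1) v γ
      rw [map_sub, proj_iota, sub_zero]
      rfl
    -- Step 4: induction hypothesis for CoQ
    have hvanQ := hvanish_coq (H := H) k hvan
    rcases ih G H (CoQ G M) hvanQ v h2 h4 with ⟨v', hv'ker, hv'co⟩
    rcases (mem_cobound_succ _ _).mp hv'co with ⟨n, hn⟩
    -- Step 5: lift v' through pH
    have hv1 : ∀ f0 ∈ (dPlus H M 1).ker, f0 ∈ cobound H M 1 :=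
      (hcoh_subsingleton_iff H M 1).mp (hvan 1 one_pos (by omega))
    have hpHsurj : Function.Surjective pH := fun x => projInv_surj hv1 x
    rcases lift_fn pH hpHsurj v' with ⟨ub, hub⟩
    -- Step 6: d ub factors through ιH
    have h6 : ∀ γ, pH ((dPlus (G ⧸ H) (Hinvariants G H (Coind G M)) (k+1) ub) γ) = 0 := by
      intro γ
      have h7 := dPlus_post pH (fun cc x => invMap_equivariant H _ _ cc x) (k+1) ub
      have h8 : (fun γ => pH (ub γ)) = v' := funext hub
      rw [← congrFun h7 γ, h8, AddMonoidHom.mem_ker.mp hv'ker, Pi.zero_apply]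
    rcases factor_fn ιH pH (fun x hx => inv_exact x hx) _ h6 with ⟨f'', hf''⟩
    -- Step 7: f'' is a cocycle
    have h9 : f'' ∈ (dPlus (G ⧸ H) (Hinvariants G H M) (k+2)).ker := by
      apply AddMonoidHom.mem_ker.mpr
      funext γ
      apply invMap_injective H (iota G M) (fun g a => iota_equivariant g a) iota_injective
      rw [← hιH]
      have h10 := dPlus_post ιH (fun cc x => invMap_equivariant H _ _ cc x) (k+2) f''
      rw [← congrFun h10 γ,
        show (fun γ => ιH (f'' γ)) = dPlus (G ⧸ H) (Hinvariants G H (Coind G M)) (k+1) ub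
          from funext hf'', d_sq]
      show (0 : C (G ⧸ H) (Hinvariants G H (Coind G M)) (k+3)) γ
        = ιH ((0 : C (G ⧸ H) (Hinvariants G H M) (k+3)) γ)
      rw [Pi.zero_apply, Pi.zero_apply, map_zero]
    -- Step 8: lift n
    rcases lift_fn (proj G M) proj_surjective n with ⟨nt, hnt⟩
    -- Step 9: the correction term factors through iota
    have h11 : ∀ γ, proj G M ((u - inflationC G H (Coind G M) (k+1) ub
        - dPlus G (Coind G M) k nt) γ) = 0 := by
      intro γ
      rw [Pi.sub_apply, Pi.sub_apply, map_sub, map_sub]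
      have h12 := dPlus_post (proj G M) (fun g x => proj_equivariant g x) k nt
      have h13 : (fun γ => proj G M (nt γ)) = n := funext hnt
      have h14 : proj G M (inflationC G H (Coind G M) (k+1) ub γ)
          = inflationC G H (CoQ G M) (k+1) v' γ := by
        show inflationC G H (CoQ G M) (k+1) (fun γ => pH (ub γ)) γ = _
        rw [funext hub]
      rw [← congrFun h12 γ, h13, hn, h14]
      show v γ - inflationC G H (CoQ G M) (k+1) v' γ
        - (v - inflationC G H (CoQ G M) (k+1) v') γ = 0
      rw [Pi.sub_apply, sub_self]
    rcases factor_fn (iota G M) (proj G M) coq_exact _ h11 with ⟨kq, hkq⟩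
    -- Step 10: conclude
    refine ⟨f'', h9, (mem_cobound_succ _ _).mpr ⟨kq, ?_⟩⟩
    funext γ
    apply iota_injective (G := G)
    have h15 := dPlus_post (iota G M) (fun g a => iota_equivariant g a) (k+1) kq
    rw [← congrFun h15 γ, funext hkq, map_sub, map_sub, d_sq]
    have h16 : dPlus G (Coind G M) (k+1) (inflationC G H (Coind G M) (k+1) ub)
        = fun γ => iota G M (inflationC G H M (k+2) f'' γ) := by
      rw [dPlus_inf (k+1) ub, ← funext hf'']
      rfl
    rw [Pi.sub_apply, Pi.sub_apply, hu, h16]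
    show iota G M (f γ) - iota G M (inflationC G H M (k+2) f'' γ) - (0 : C G (Coind G M) (k+2)) γ
      = iota G M ((f - inflationC G H M (k+2) f'') γ)
    rw [Pi.zero_apply, sub_zero, Pi.sub_apply, map_sub]

lemma contractNth_one {Γ : Type} [Monoid Γ] {n : ℕ} (j : Fin (n+1)) :
    Fin.contractNth j (· * ·) (fun _ : Fin (n+1) => (1 : Γ)) = fun _ : Fin n => (1 : Γ) := by
  funext i
  rcases lt_trichotomy (i : ℕ) (j : ℕ) with h | h | h
  · rw [Fin.contractNth_apply_of_lt _ _ _ _ h]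
  · rw [Fin.contractNth_apply_of_eq _ _ _ _ h, one_mul]
  · rw [Fin.contractNth_apply_of_gt _ _ _ _ h]

lemma part4gen (k : ℕ) (G : Type) [Group G] (H : Subgroup G) [H.Normal] (M : Type)
    [AddCommGroup M] [DistribMulAction G M]
    (f : C (G ⧸ H) (Hinvariants G H M) (k+1))
    (hf : f ∈ (dPlus (G ⧸ H) (Hinvariants G H M) (k+1)).ker) :
    restrictionC G H M (k+1) (inflationC G H M (k+1) f) ∈ cobound H M (k+1) := by
  set c' : Hinvariants G H M := f (fun _ => (1 : G ⧸ H)) with hc'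
  set c : M := (c' : M) with hcdef
  have hcinv : ∀ h : H, (h : G) • c = c := fun h => c'.2 h
  set S2 : ℤ := ∑ j : Fin (k+2), ((-1 : ℤ) ^ ((j : ℕ) + 1)) with hS2
  set S1 : ℤ := ∑ j : Fin (k+1), ((-1 : ℤ) ^ ((j : ℕ) + 1)) with hS1
  -- cocycle identity at the all-ones tuple
  have honeq := congrFun (AddMonoidHom.mem_ker.mp hf) (fun _ => (1 : G ⧸ H))
  rw [dPlus_apply, Pi.zero_apply] at honeq
  simp only [contractNth_one, one_smul] at honeq
  -- honeq : c' + ∑ j, (-1)^(j+1) • c' = 0  (in the subtype)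
  have honec : c' + S2 • c' = 0 := by
    rw [hS2, Finset.sum_smul]
    exact honeq
  have hcM : c + S2 • c = 0 := by
    have := congrArg (Hinvariants G H M).subtype honec
    rwa [map_add, map_zsmul, map_zero] at this
  refine (mem_cobound_succ k _).mpr ⟨fun _ => ((-1 : ℤ) ^ (k+1)) • c, ?_⟩
  funext γ
  rw [dPlus_apply]
  have hres : restrictionC G H M (k+1) (inflationC G H M (k+1) f) γ = c := by
    show ((f (fun i => QuotientGroup.mk ((γ i : G)))) : M) = c
    rw [show (fun i : Fin (k+1) => (QuotientGroup.mk ((γ i : G)) : G ⧸ H))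
      = (fun _ : Fin (k+1) => (1 : G ⧸ H)) from
      funext fun i => (QuotientGroup.eq_one_iff _).mpr (γ i).2]
  rw [hres]
  have hsm : γ 0 • (((-1 : ℤ) ^ (k+1)) • c) = ((-1 : ℤ) ^ (k+1)) • c := by
    rw [smul_comm]
    have h5 : γ 0 • c = c := hcinv (γ 0)
    rw [h5]
  have hsum : ∑ j : Fin (k+1), ((-1 : ℤ) ^ ((j : ℕ) + 1)) • (((-1 : ℤ) ^ (k+1)) • c)
      = S1 • (((-1 : ℤ) ^ (k+1)) • c) := by
    rw [hS1, Finset.sum_smul]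
  rw [hsm, hsum]
  have hrel : S2 = S1 + (-1 : ℤ) ^ (k+2) := by
    rw [hS2, hS1, Fin.sum_univ_castSucc]
    simp
  rw [smul_smul, ← add_smul]
  have hpow : ((-1 : ℤ)) ^ (k+2) * (-1 : ℤ) ^ (k+1) = -1 := by
    rw [← pow_add]
    exact Odd.neg_one_pow ⟨k + 1, by ring⟩
  have key : ((-1 : ℤ) ^ (k+1) + S1 * (-1 : ℤ) ^ (k+1))
      = (-1 : ℤ) ^ (k+1) * (1 + S2) + 1 := by
    rw [hrel]
    have heven : ((-1 : ℤ)) ^ (k * 2) = 1 := by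
      rw [mul_comm, pow_mul]
      norm_num
    linear_combination hpow + 2 * heven
  rw [key, add_smul, one_smul, mul_smul]
  have h0 : (1 + S2) • c = 0 := by
    rw [add_smul, one_smul]
    exact hcM
  rw [h0, smul_zero, zero_add]

end InfResAux

set_option maxHeartbeats 1000000 in
/-- Inflation–restriction exactness: if `H ⊴ G`, `M` is a `G`-module, `r ≥ 1`, and
`H^i(H, M) = 0` for all `0 < i < r`, then
`0 → H^r(G/H, M^H) → H^r(G, M) → H^r(H, M)` is exact (expressed here on cochains:
inflation and restriction map cocycles to cocycles, inflation is injective modulo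
coboundaries, the composite is zero on cohomology, and every cocycle of `G` whose
restriction is a coboundary is, modulo coboundaries, an inflation). -/
theorem inflation_restriction_exact
    (G : Type) [Group G] (H : Subgroup G) [H.Normal]
    (M : Type) [AddCommGroup M] [DistribMulAction G M]
    (r : ℕ) (hr : 1 ≤ r)
    (hvanish : ∀ i : ℕ, 0 < i → i < r → Subsingleton (GroupCoh.Hcoh H M i)) :
    (∀ f ∈ (GroupCoh.dPlus (G ⧸ H) (Hinvariants G H M) r).ker,
      inflationC G H M r f ∈ (GroupCoh.dPlus G M r).ker) ∧
    (∀ f ∈ (GroupCoh.dPlus G M r).ker,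
      restrictionC G H M r f ∈ (GroupCoh.dPlus H M r).ker) ∧
    (∀ f ∈ (GroupCoh.dPlus (G ⧸ H) (Hinvariants G H M) r).ker,
      inflationC G H M r f ∈ GroupCoh.cobound G M r →
        f ∈ GroupCoh.cobound (G ⧸ H) (Hinvariants G H M) r) ∧
    (∀ f ∈ (GroupCoh.dPlus (G ⧸ H) (Hinvariants G H M) r).ker,
      restrictionC G H M r (inflationC G H M r f) ∈ GroupCoh.cobound H M r) ∧
    (∀ f ∈ (GroupCoh.dPlus G M r).ker,
      restrictionC G H M r f ∈ GroupCoh.cobound H M r →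
        ∃ f' ∈ (GroupCoh.dPlus (G ⧸ H) (Hinvariants G H M) r).ker,
          f - inflationC G H M r f' ∈ GroupCoh.cobound G M r) := by
  obtain ⟨k, rfl⟩ : ∃ k, r = k + 1 := ⟨r - 1, by omega⟩
  refine ⟨?_, ?_, ?_, ?_, ?_⟩
  · intro f hf
    apply AddMonoidHom.mem_ker.mpr
    rw [dPlus_inf (k+1) f, AddMonoidHom.mem_ker.mp hf]
    funext γ
    show ((0 : GroupCoh.C (G ⧸ H) (Hinvariants G H M) (k+2))
      (fun i => QuotientGroup.mk (γ i)) : M) = (0 : GroupCoh.C G M (k+2)) γ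
    rw [Pi.zero_apply, Pi.zero_apply, ZeroMemClass.coe_zero]
  · intro f hf
    apply AddMonoidHom.mem_ker.mpr
    rw [dPlus_res (k+1) f, AddMonoidHom.mem_ker.mp hf]
    funext γ
    show (0 : GroupCoh.C G M (k+2)) (fun i => ((γ i : H) : G)) = (0 : GroupCoh.C H M (k+2)) γ
    rw [Pi.zero_apply, Pi.zero_apply]
  · intro f hf hinf
    exact part3gen k G H M hvanish f hf hinf
  · intro f hf
    exact part4gen k G H M f hf
  · intro f hf hres
    exact part5gen k G H M hvanish f hf hres
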